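/- Suppose $(\varphi_n)_{n=1}^{N}$ are real numbers whose gaps $\delta_n = \varphi_{n+1}-\varphi_n$ for $n=1,\dots,N-1$ are increasing ($\delta_n \ge \delta_{n-1}$) and each satisfies $\delta_n \in [\lambda, 2\pi - \lambda]$ for some $\lambda \in (0,\pi]$. Then $\left|\sum_{n=1}^{N} e^{i\varphi_n}\right| \le \cot(\lambda/4)$. -/

import Mathlib

lemma KL_cot_sub {a b : ℝ} (ha : Real.sin a ≠ 0) (hb : Real.sin b ≠ 0) :
    Real.cot a - Real.cot b = Real.sin (b - a) / (Real.sin a * Real.sin b) := by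
  rw [Real.cot_eq_cos_div_sin, Real.cot_eq_cos_div_sin, Real.sin_sub]
  field_simp

lemma KL_cot_anti {a b : ℝ} (ha : 0 < a) (hab : a ≤ b) (hb : b < Real.pi) :
    Real.cot b ≤ Real.cot a := by
  have hsa : 0 < Real.sin a := Real.sin_pos_of_pos_of_lt_pi ha (lt_of_le_of_lt hab hb)
  have hsb : 0 < Real.sin b := Real.sin_pos_of_pos_of_lt_pi (lt_of_lt_of_le ha hab) hb
  have h := KL_cot_sub hsa.ne' hsb.ne'
  have hsab : 0 ≤ Real.sin (b - a) :=
    Real.sin_nonneg_of_nonneg_of_le_pi (by linarith) (by linarith)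
  nlinarith [div_nonneg hsab (mul_nonneg hsa.le hsb.le)]

lemma KL_sin_half (x : ℝ) : Real.sin x = 2 * Real.sin (x/2) * Real.cos (x/2) := by
  have := Real.sin_two_mul (x/2); rwa [show 2*(x/2)=x by ring] at this

lemma KL_cos_half (x : ℝ) : Real.cos x = 1 - 2 * Real.sin (x/2)^2 := by
  have := Real.cos_two_mul (x/2)
  rw [show 2*(x/2)=x by ring] at this
  nlinarith [Real.sin_sq_add_cos_sq (x/2)]

lemma KL_half1 {x : ℝ} (h0 : 0 < x) (h1 : x < Real.pi) :
    Real.cot x + 1 / Real.sin x = Real.cot (x / 2) := by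
  have hs : 0 < Real.sin (x/2) := Real.sin_pos_of_pos_of_lt_pi (by linarith) (by linarith [Real.pi_pos])
  have hc : 0 < Real.cos (x/2) := Real.cos_pos_of_mem_Ioo ⟨by linarith [Real.pi_pos], by linarith⟩
  have hsx := KL_sin_half x
  have hcx := KL_cos_half x
  have hsxne : Real.sin x ≠ 0 := by rw [hsx]; positivity
  rw [Real.cot_eq_cos_div_sin, Real.cot_eq_cos_div_sin, hcx, hsx]
  rw [div_add_div _ _ (by positivity) (by positivity), div_eq_div_iff (by positivity) hs.ne']
  nlinarith [Real.sin_sq_add_cos_sq (x/2)]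

lemma KL_half2 {x : ℝ} (h0 : 0 < x) (h1 : x < Real.pi) :
    1 / Real.sin x - Real.cot x = Real.tan (x / 2) := by
  have hs : 0 < Real.sin (x/2) := Real.sin_pos_of_pos_of_lt_pi (by linarith) (by linarith [Real.pi_pos])
  have hc : 0 < Real.cos (x/2) := Real.cos_pos_of_mem_Ioo ⟨by linarith [Real.pi_pos], by linarith⟩
  have hsx := KL_sin_half x
  have hcx := KL_cos_half x
  rw [Real.cot_eq_cos_div_sin, Real.tan_eq_sin_div_cos, hcx, hsx]
  rw [div_sub_div _ _ (by positivity) (by positivity), div_eq_div_iff (by positivity) hc.ne']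
  nlinarith [Real.sin_sq_add_cos_sq (x/2)]

lemma KL_exp_ne_one {θ : ℝ} (h0 : 0 < θ) (h2 : θ < 2 * Real.pi) :
    Complex.exp (Complex.I * θ) ≠ 1 := by
  intro h
  rw [Complex.exp_eq_one_iff] at h
  obtain ⟨n, hn⟩ := h
  have h1 : Complex.I * (θ : ℂ) = Complex.I * ((n : ℤ) * (2 * (Real.pi : ℝ)) : ℝ) := by
    rw [hn]; push_cast; ring
  have h2' := mul_left_cancel₀ Complex.I_ne_zero h1
  have hθ : θ = (n : ℝ) * (2 * Real.pi) := by exact_mod_cast h2'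
  have hpi := Real.pi_pos
  rcases le_or_gt (n : ℝ) 0 with h | h
  · nlinarith
  · have : (1:ℝ) ≤ (n:ℝ) := by
      have : (0:ℤ) < n := by exact_mod_cast h
      exact_mod_cast this
    nlinarith

lemma KL_g_formula {θ : ℝ} (h0 : 0 < θ) (h2 : θ < 2 * Real.pi) :
    (Complex.exp (Complex.I * θ) - 1)⁻¹ =
      -1/2 - Complex.I/2 * (Real.cot (θ/2) : ℝ) := by
  have hs : 0 < Real.sin (θ/2) := Real.sin_pos_of_pos_of_lt_pi (by linarith) (by linarith)
  set S : ℂ := ((Real.sin (θ/2) : ℝ) : ℂ) with hS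
  set C : ℂ := ((Real.cos (θ/2) : ℝ) : ℂ) with hC
  have hsc : S^2 + C^2 = 1 := by
    rw [hS, hC]; norm_cast; exact_mod_cast Real.sin_sq_add_cos_sq (θ/2)
  have hsne : S ≠ 0 := by rw [hS]; exact_mod_cast hs.ne'
  have hexp : Complex.exp (Complex.I * θ) = (Real.cos θ : ℝ) + (Real.sin θ : ℝ) * Complex.I := by
    rw [mul_comm, Complex.exp_mul_I]; norm_cast
  have hsθ : Real.sin θ = 2 * Real.sin (θ/2) * Real.cos (θ/2) := by
    have := Real.sin_two_mul (θ/2); rwa [show 2*(θ/2)=θ by ring] at this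
  have hcθ : Real.cos θ = 1 - 2 * Real.sin (θ/2)^2 := by
    have := Real.cos_two_mul (θ/2)
    rw [show 2*(θ/2)=θ by ring] at this
    nlinarith [Real.sin_sq_add_cos_sq (θ/2)]
  have hL : Complex.exp (Complex.I * θ) - 1 = 2*S*Complex.I*(C + Complex.I*S) := by
    rw [hexp, hsθ, hcθ, hS, hC]
    push_cast [-Complex.ofReal_sin, -Complex.ofReal_cos]
    linear_combination (-2*(Real.sin (θ/2):ℂ)^2) * Complex.I_sq
  have hcot : (Real.cot (θ/2) : ℂ) = C / S := by
    rw [Real.cot_eq_cos_div_sin, hS, hC]; push_cast [-Complex.ofReal_sin, -Complex.ofReal_cos]; ring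
  have hR : (-1/2 - Complex.I/2 * (Real.cot (θ/2) : ℝ) : ℂ) = -((S + Complex.I*C) / (2*S)) := by
    rw [hcot]; field_simp; ring
  refine inv_eq_of_mul_eq_one_right ?_
  rw [hL, hR]
  field_simp
  linear_combination (-(1-2*S)*(C^2+S^2) + Complex.I*(-C*S*(1-2*S)) - 2*S*(C^2+S^2) - 2*Complex.I*C*S^2) * Complex.I_sq + (1-2*S+2*S) * hsc

lemma KL_abs_aux {x : ℝ} (hx : 0 < Real.sin x) (ε : ℝ) (hε : ε = 1 ∨ ε = -1) :
    ‖(ε/2 : ℝ) - Complex.I/2 * (Real.cot x : ℝ)‖ = 1 / (2 * Real.sin x) := by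
  have h1 : ((ε/2 : ℝ) - Complex.I/2 * (Real.cot x : ℝ) : ℂ)
      = ((ε/2 : ℝ) : ℂ) + ((-(Real.cot x)/2 : ℝ) : ℂ) * Complex.I := by
    push_cast [-Complex.ofReal_cot]; ring
  rw [h1, Complex.norm_def, Complex.normSq_add_mul_I]
  have hε2 : ε^2 = 1 := by rcases hε with h | h <;> rw [h] <;> norm_num
  have hkey : (ε/2)^2 + (-(Real.cot x)/2)^2 = (1/(2*Real.sin x))^2 := by
    rw [Real.cot_eq_cos_div_sin]
    field_simp
    linear_combination (Real.sin x^2)*hε2 + Real.sin_sq_add_cos_sq x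
  rw [hkey, Real.sqrt_sq (by positivity)]

lemma KL_abel (E g : ℕ → ℂ) (c : ℕ → ℝ) (M : ℕ) (hM : 1 ≤ M)
    (hE : ∀ n, ‖E n‖ = 1)
    (hg : ∀ n, 1 ≤ n → n ≤ M → (E (n+1) - E n) * g n = E n)
    (habs : ∀ n, 1 ≤ n → n + 1 ≤ M → ‖g n - g (n+1)‖ ≤ c n - c (n+1)) :
    ‖(∑ n ∈ Finset.Icc 1 (M+1), E n) - E (M+1) * (1 + g M) + E 1 * g 1‖
      ≤ c 1 - c M := by
  induction M, hM using Nat.le_induction with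
  | base =>
    have h1 : (∑ n ∈ Finset.Icc 1 2, E n) = E 1 + E 2 := by
      rw [Finset.sum_Icc_succ_top (by norm_num), Finset.Icc_self, Finset.sum_singleton]
    have h2 := hg 1 le_rfl le_rfl
    have h3 : (∑ n ∈ Finset.Icc 1 2, E n) - E 2 * (1 + g 1) + E 1 * g 1 = 0 := by
      rw [h1]; linear_combination -h2
    rw [h3]
    simp
  | succ M hM ih =>
    have hg' : ∀ n, 1 ≤ n → n ≤ M → (E (n+1) - E n) * g n = E n :=
      fun n h1 h2 => hg n h1 (by omega)
    have habs' : ∀ n, 1 ≤ n → n + 1 ≤ M → ‖g n - g (n+1)‖ ≤ c n - c (n+1) :=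
      fun n h1 h2 => habs n h1 (by omega)
    have IH := ih hg' habs'
    have hsum : (∑ n ∈ Finset.Icc 1 (M+1+1), E n) = (∑ n ∈ Finset.Icc 1 (M+1), E n) + E (M+2) :=
      Finset.sum_Icc_succ_top (by omega) E
    have hgM := hg (M+1) (by omega) le_rfl
    have hstep : (∑ n ∈ Finset.Icc 1 (M+1+1), E n) - E (M+1+1) * (1 + g (M+1)) + E 1 * g 1
        = ((∑ n ∈ Finset.Icc 1 (M+1), E n) - E (M+1) * (1 + g M) + E 1 * g 1)
          + E (M+1) * (g M - g (M+1)) := by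
      rw [hsum]; linear_combination -hgM
    rw [hstep]
    calc ‖_‖ ≤ ‖(∑ n ∈ Finset.Icc 1 (M+1), E n)
            - E (M+1) * (1 + g M) + E 1 * g 1‖ + ‖E (M+1) * (g M - g (M+1))‖ :=
          norm_add_le _ _
      _ ≤ (c 1 - c M) + (c M - c (M+1)) := by
          refine add_le_add IH ?_
          rw [norm_mul, hE, one_mul]
          exact habs M (by omega) (by omega)
      _ = c 1 - c (M+1) := by ring

/-- **Kusmin–Landau inequality.** If the gaps `δ n = φ (n+1) - φ n` of the real phases
`φ 1, …, φ N` are increasing and each lies in `[λ, 2π - λ]` for some `0 < λ ≤ π`, then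
`|∑_{n=1}^N e^{i φ n}| ≤ cot (λ/4)`. -/
theorem kusmin_landau (N : ℕ) (hN : 1 ≤ N) (φ : ℕ → ℝ) (lam : ℝ)
    (hlam_pos : 0 < lam) (hlam_le : lam ≤ Real.pi)
    (hmono : ∀ n, 2 ≤ n → n ≤ N - 1 → φ n - φ (n - 1) ≤ φ (n + 1) - φ n)
    (hgap : ∀ n, 1 ≤ n → n ≤ N - 1 →
      lam ≤ φ (n + 1) - φ n ∧ φ (n + 1) - φ n ≤ 2 * Real.pi - lam) :
    ‖∑ n ∈ Finset.Icc 1 N, Complex.exp (Complex.I * (φ n))‖ ≤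
      Real.cot (lam / 4) := by
  have hpi := Real.pi_pos
  have hcot_lam : (1:ℝ) ≤ Real.cot (lam/4) := by
    have h4 : Real.cot (Real.pi/4) = 1 := by
      rw [Real.cot_eq_cos_div_sin, Real.cos_pi_div_four, Real.sin_pi_div_four]
      rw [div_self (by positivity)]
    rw [← h4]
    exact KL_cot_anti (by linarith) (by linarith) (by linarith)
  rcases eq_or_lt_of_le hN with h1 | h2
  · -- N = 1
    rw [← h1, Finset.Icc_self, Finset.sum_singleton]
    rw [mul_comm, Complex.norm_exp_ofReal_mul_I]
    exact hcot_lam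
  · -- N ≥ 2
    obtain ⟨M, rfl⟩ : ∃ M, N = M + 1 := ⟨N - 1, by omega⟩
    have hM : 1 ≤ M := by omega
    simp only [Nat.add_sub_cancel] at hmono hgap
    set δ : ℕ → ℝ := fun n => φ (n+1) - φ n with hδ
    set E : ℕ → ℂ := fun n => Complex.exp (Complex.I * (φ n : ℝ)) with hE
    set g : ℕ → ℂ := fun n => (Complex.exp (Complex.I * (δ n : ℝ)) - 1)⁻¹ with hg
    set c : ℕ → ℝ := fun n => Real.cot (δ n / 2) / 2 with hc
    -- basic bounds on gaps
    have hδbnd : ∀ n, 1 ≤ n → n ≤ M → lam ≤ δ n ∧ δ n ≤ 2 * Real.pi - lam := hgap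
    have hδmono : ∀ n, 1 ≤ n → n + 1 ≤ M → δ n ≤ δ (n+1) := by
      intro n h1 h2
      have h3 := hmono (n+1) (by omega) h2
      simp only [Nat.add_sub_cancel] at h3
      exact h3
    have hφsplit : ∀ n, (Complex.I * (φ (n+1) : ℝ) : ℂ)
        = Complex.I * (φ n : ℝ) + Complex.I * (δ n : ℝ) := by
      intro n; rw [hδ]; push_cast; ring
    clear_value δ E g c
    have hδpos : ∀ n, 1 ≤ n → n ≤ M → 0 < δ n ∧ δ n < 2 * Real.pi := by
      intro n h1 h2
      obtain ⟨ha, hb⟩ := hδbnd n h1 h2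
      constructor <;> linarith
    -- g formula
    have hgform : ∀ n, 1 ≤ n → n ≤ M →
        g n = -1/2 - Complex.I/2 * (Real.cot (δ n / 2) : ℝ) := by
      intro n h1 h2
      obtain ⟨ha, hb⟩ := hδpos n h1 h2
      rw [hg]
      exact KL_g_formula ha hb
    have hEabs : ∀ n, ‖E n‖ = 1 := by
      intro n; rw [hE]; simp only; rw [mul_comm]; exact Complex.norm_exp_ofReal_mul_I _
    have hgmul : ∀ n, 1 ≤ n → n ≤ M → (E (n+1) - E n) * g n = E n := by
      intro n h1 h2
      obtain ⟨ha, hb⟩ := hδpos n h1 h2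
      have hne : Complex.exp (Complex.I * (δ n : ℝ)) - 1 ≠ 0 :=
        sub_ne_zero.2 (KL_exp_ne_one ha hb)
      have hsplit : E (n+1) = E n * Complex.exp (Complex.I * (δ n : ℝ)) := by
        rw [hE]; simp only; rw [← Complex.exp_add, hφsplit n]
      rw [hg]; simp only
      rw [hsplit, show E n * Complex.exp (Complex.I * (δ n : ℝ)) - E n
            = E n * (Complex.exp (Complex.I * (δ n : ℝ)) - 1) from by ring,
        mul_assoc, mul_inv_cancel₀ hne, mul_one]
    have habs : ∀ n, 1 ≤ n → n + 1 ≤ M → ‖g n - g (n+1)‖ ≤ c n - c (n+1) := by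
      intro n h1 h2
      obtain ⟨ha1, hb1⟩ := hδbnd n h1 (by omega)
      obtain ⟨ha2, hb2⟩ := hδbnd (n+1) (by omega) h2
      have hmono' : δ n ≤ δ (n+1) := hδmono n h1 h2
      have hcotle : Real.cot (δ (n+1) / 2) ≤ Real.cot (δ n / 2) :=
        KL_cot_anti (by linarith) (by linarith) (by linarith)
      rw [hgform n h1 (by omega), hgform (n+1) (by omega) h2]
      have heq : (-1/2 - Complex.I/2 * (Real.cot (δ n / 2) : ℝ))
          - (-1/2 - Complex.I/2 * (Real.cot (δ (n+1) / 2) : ℝ))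
          = Complex.I/2 * ((Real.cot (δ (n+1) / 2) - Real.cot (δ n / 2) : ℝ) : ℂ) := by
        push_cast [-Complex.ofReal_cot]; ring
      rw [heq, norm_mul]
      rw [Complex.norm_real, Real.norm_eq_abs]
      have hI2 : ‖Complex.I/2‖ = 1/2 := by
        rw [norm_div, Complex.norm_I, Complex.norm_two]
      rw [hI2, abs_of_nonpos (by linarith)]
      rw [hc]; simp only
      ring_nf
      nlinarith [hcotle]
    -- the Abel bound
    have hX := KL_abel E g c M hM hEabs hgmul habs
    -- decompose S
    have hS : (∑ n ∈ Finset.Icc 1 (M+1), E n)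
        = ((∑ n ∈ Finset.Icc 1 (M+1), E n) - E (M+1) * (1 + g M) + E 1 * g 1)
          - E 1 * g 1 + E (M+1) * (1 + g M) := by ring
    obtain ⟨ha1, hb1⟩ := hδbnd 1 le_rfl hM
    obtain ⟨haM, hbM⟩ := hδbnd M hM le_rfl
    have hs1 : 0 < Real.sin (δ 1 / 2) :=
      Real.sin_pos_of_pos_of_lt_pi (by linarith) (by linarith)
    have hsM : 0 < Real.sin (δ M / 2) :=
      Real.sin_pos_of_pos_of_lt_pi (by linarith) (by linarith)
    -- |g 1|
    have habsg1 : ‖E 1 * g 1‖ = 1/(2 * Real.sin (δ 1 / 2)) := by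
      rw [norm_mul, hEabs, one_mul, hgform 1 le_rfl hM]
      have : (-1/2 - Complex.I/2 * (Real.cot (δ 1 / 2) : ℝ) : ℂ)
          = (((-1:ℝ)/2 : ℝ) : ℂ) - Complex.I/2 * (Real.cot (δ 1 / 2) : ℝ) := by
        push_cast [-Complex.ofReal_cot]; ring
      rw [this]
      exact KL_abs_aux hs1 (-1) (Or.inr rfl)
    have habsgM : ‖E (M+1) * (1 + g M)‖ = 1/(2 * Real.sin (δ M / 2)) := by
      rw [norm_mul, hEabs, one_mul, hgform M hM le_rfl]
      have : (1 + (-1/2 - Complex.I/2 * (Real.cot (δ M / 2) : ℝ)) : ℂ)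
          = (((1:ℝ)/2 : ℝ) : ℂ) - Complex.I/2 * (Real.cot (δ M / 2) : ℝ) := by
        push_cast [-Complex.ofReal_cot]; ring
      rw [this]
      exact KL_abs_aux hsM 1 (Or.inl rfl)
    have hbound : ‖∑ n ∈ Finset.Icc 1 (M+1), E n‖
        ≤ (c 1 - c M) + 1/(2 * Real.sin (δ 1 / 2)) + 1/(2 * Real.sin (δ M / 2)) := by
      rw [hS]
      calc ‖_‖
          ≤ ‖((∑ n ∈ Finset.Icc 1 (M+1), E n) - E (M+1) * (1 + g M) + E 1 * g 1)
              - E 1 * g 1‖ + ‖E (M+1) * (1 + g M)‖ := norm_add_le _ _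
        _ ≤ ‖(∑ n ∈ Finset.Icc 1 (M+1), E n) - E (M+1) * (1 + g M) + E 1 * g 1‖
              + ‖E 1 * g 1‖ + ‖E (M+1) * (1 + g M)‖ := by
            exact add_le_add (norm_sub_le _ _) le_rfl
        _ ≤ (c 1 - c M) + 1/(2 * Real.sin (δ 1 / 2)) + 1/(2 * Real.sin (δ M / 2)) := by
            rw [habsg1, habsgM]
            exact add_le_add (add_le_add hX le_rfl) le_rfl
    -- final trigonometric estimate
    have hfin : (c 1 - c M) + 1/(2 * Real.sin (δ 1 / 2)) + 1/(2 * Real.sin (δ M / 2))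
        ≤ Real.cot (lam / 4) := by
      have hh1 : Real.cot (δ 1 / 2) + 1 / Real.sin (δ 1 / 2) = Real.cot (δ 1 / 4) := by
        have := KL_half1 (x := δ 1 / 2) (by linarith) (by linarith)
        rwa [show δ 1 / 2 / 2 = δ 1 / 4 from by ring] at this
      have hh2 : 1 / Real.sin (δ M / 2) - Real.cot (δ M / 2) = Real.tan (δ M / 4) := by
        have := KL_half2 (x := δ M / 2) (by linarith) (by linarith)
        rwa [show δ M / 2 / 2 = δ M / 4 from by ring] at this
      have hc1 : Real.cot (δ 1 / 4) ≤ Real.cot (lam / 4) :=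
        KL_cot_anti (by linarith) (by linarith) (by linarith)
      have htM : Real.tan (δ M / 4) ≤ Real.cot (lam / 4) := by
        have hmem1 : δ M / 4 ∈ Set.Ioo (-(Real.pi/2)) (Real.pi/2) := by
          constructor <;> [linarith; linarith]
        have hmem2 : Real.pi/2 - lam/4 ∈ Set.Ioo (-(Real.pi/2)) (Real.pi/2) := by
          constructor <;> [linarith; linarith]
        have hle : δ M / 4 ≤ Real.pi/2 - lam/4 := by linarith
        have := Real.strictMonoOn_tan.monotoneOn hmem1 hmem2 hle
        rwa [Real.tan_pi_div_two_sub, show (Real.tan (lam/4))⁻¹ = Real.cot (lam/4) from by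
          rw [Real.cot_eq_cos_div_sin, Real.tan_eq_sin_div_cos, inv_div]] at this
      have he1 : 1/(2 * Real.sin (δ 1 / 2)) = (1 / Real.sin (δ 1 / 2))/2 := by ring
      have heM : 1/(2 * Real.sin (δ M / 2)) = (1 / Real.sin (δ M / 2))/2 := by ring
      rw [hc]; simp only
      rw [he1, heM]
      linarith [hh1, hh2, hc1, htM]
    exact le_trans hbound hfin
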